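/- Let uV, uF : ℤ × ℤ → (Fin 3 → ℝ) and σV, σF, hV, hF : ℤ × ℤ → ℝ be such that Q_B((uV(v), σV(v), hV(v)), (uF(f), σF(f), hF(f))) = 0, i.e. ⟪uV(v), uF(f)⟫ = σV(v)·σF(f), for every incident vertex–face pair (v, f) (a polar binet with respect to the Blaschke cylinder). Then for every v ∈ ℤ × ℤ one has ⟪uV(v) ×₃ uV(v+(1,0)), uF(v−(0,1)) ×₃ uF(v)⟫ = 0 and ⟪uV(v) ×₃ uV(v+(0,1)), uF(v−(1,0)) ×₃ uF(v)⟫ = 0, where ×₃ is the cross product on ℝ³. (The projection of a polar binet with respect to the Blaschke cylinder is an orthogonal bi*net: the intersection lines of the corresponding planes at dual edges are orthogonal.) -/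

import Mathlib

open Matrix

/-- A vertex `v` is incident to the face labeled `f` if `v` is one of its four corners. -/
def Incident (v f : ℤ × ℤ) : Prop :=
  v = f ∨ v = f + (1, 0) ∨ v = f + (0, 1) ∨ v = f + (1, 1)

/-- The (degenerate) Blaschke form on `ℝ³ × ℝ × ℝ`:
`Q_B((u,σ,h),(u',σ',h')) = ⟪u,u'⟫ - σσ'`. -/
def QB (u : Fin 3 → ℝ) (σ h : ℝ) (u' : Fin 3 → ℝ) (σ' h' : ℝ) : ℝ :=
  u ⬝ᵥ u' - σ * σ'

/-- The projection of a polar binet with respect to the Blaschke cylinder is an orthogonal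
bi*net: the intersection lines of the corresponding planes at dual edges of every cross
are orthogonal. -/
theorem stmt_10 (uV uF : ℤ × ℤ → Fin 3 → ℝ) (σV σF hV hF : ℤ × ℤ → ℝ)
    (hpolar : ∀ v f : ℤ × ℤ, Incident v f →
      QB (uV v) (σV v) (hV v) (uF f) (σF f) (hF f) = 0) :
    ∀ v : ℤ × ℤ,
      (uV v ⨯₃ uV (v + (1, 0))) ⬝ᵥ (uF (v - (0, 1)) ⨯₃ uF v) = 0 ∧
      (uV v ⨯₃ uV (v + (0, 1))) ⬝ᵥ (uF (v - (1, 0)) ⨯₃ uF v) = 0 := by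
  intro v
  have key : ∀ v f, Incident v f → uV v ⬝ᵥ uF f = σV v * σF f := by
    intro v f h
    have := hpolar v f h
    unfold QB at this
    linarith
  have h1 : uV v ⬝ᵥ uF (v - (0, 1)) = σV v * σF (v - (0, 1)) := by
    apply key; right; right; left; simp [Prod.ext_iff]
  have h2 : uV v ⬝ᵥ uF v = σV v * σF v := by
    apply key; left; rfl
  have h3 : uV (v + (1, 0)) ⬝ᵥ uF (v - (0, 1)) = σV (v + (1, 0)) * σF (v - (0, 1)) := by
    apply key; right; right; right; simp [Prod.ext_iff]
  have h4 : uV (v + (1, 0)) ⬝ᵥ uF v = σV (v + (1, 0)) * σF v := by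
    apply key; right; left; rfl
  have h5 : uV v ⬝ᵥ uF (v - (1, 0)) = σV v * σF (v - (1, 0)) := by
    apply key; right; left; simp [Prod.ext_iff]
  have h6 : uV (v + (0, 1)) ⬝ᵥ uF (v - (1, 0)) = σV (v + (0, 1)) * σF (v - (1, 0)) := by
    apply key; right; right; right; simp [Prod.ext_iff]
  have h7 : uV (v + (0, 1)) ⬝ᵥ uF v = σV (v + (0, 1)) * σF v := by
    apply key; right; right; left; rfl
  constructor <;> rw [cross_dot_cross]
  · rw [h1, h2, h3, h4]; ring
  · rw [h5, h2, h6, h7]; ring
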